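/- Let q ≥ 2 be a power of a prime. The subset of ℂ² given by the union S₁ ∪ S₂ ∪ S₃ ∪ S₄ ∪ S₅, where S₁ = {Φ_{B₂}(ζ,ξ) : ζ^{q-1} = 1, ξ^{q+1} = 1}, S₂ = {Φ_{B₂}(ζ,ξ) : ζ^{q-1} = ξ^{q-1} = 1}, S₃ = {Φ_{B₂}(ζ,ξ) : ζ^{q+1} = ξ^{q+1} = 1}, S₄ = {Φ_{B₂}(ζ, ζ^q) : ζ^{q²-1} = 1}, and S₅ = {Φ_{B₂}(ζ, ζ^q) : ζ^{q²+1} = 1}, has exactly q² elements. -/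

import Mathlib

/-- `Φ_{B₂}(u,v) = (u + u⁻¹ + v + v⁻¹, uv + (uv)⁻¹ + uv⁻¹ + u⁻¹v)`. -/
noncomputable def PhiB2 (u v : ℂ) : ℂ × ℂ :=
  (u + u⁻¹ + v + v⁻¹, u * v + (u * v)⁻¹ + u * v⁻¹ + u⁻¹ * v)

/-- Generic "two-to-one" counting lemma. -/
lemma twoToOne {α β : Type*} [DecidableEq α] [DecidableEq β]
    (F : Finset α) (f : α → β) (σ : α → α)
    (hmem : ∀ a ∈ F, σ a ∈ F)
    (hinv : ∀ a ∈ F, σ (σ a) = a)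
    (hfσ : ∀ a ∈ F, f (σ a) = f a)
    (hfib : ∀ a ∈ F, ∀ b ∈ F, f a = f b → b = a ∨ b = σ a) :
    2 * (F.image f).card = F.card + (F.filter fun a => σ a = a).card := by
  have h1 : F.card = ∑ z ∈ F.image f, (F.filter fun a => f a = z).card :=
    Finset.card_eq_sum_card_fiberwise fun a ha => Finset.mem_image_of_mem f ha
  have h2 : (F.filter fun a => σ a = a).card
      = ∑ z ∈ F.image f, ((F.filter fun a => σ a = a).filter fun a => f a = z).card :=
    Finset.card_eq_sum_card_fiberwise fun a ha =>
      Finset.mem_image_of_mem f (Finset.mem_filter.mp ha).1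
  have h3 : 2 * (F.image f).card = ∑ _z ∈ F.image f, 2 := by
    rw [Finset.sum_const, smul_eq_mul, mul_comm]
  rw [h3, h1, h2, ← Finset.sum_add_distrib]
  apply Finset.sum_congr rfl
  intro z hz
  obtain ⟨a, ha, rfl⟩ := Finset.mem_image.mp hz
  have hfe : F.filter (fun b => f b = f a) = {a, σ a} := by
    ext b
    simp only [Finset.mem_filter, Finset.mem_insert, Finset.mem_singleton]
    constructor
    · rintro ⟨hb, hfb⟩
      exact hfib a ha b hb hfb.symm
    · rintro (rfl | rfl)
      · exact ⟨ha, rfl⟩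
      · exact ⟨hmem a ha, hfσ a ha⟩
  have hcomm : (F.filter fun x => σ x = x).filter (fun b => f b = f a)
      = (F.filter fun b => f b = f a).filter fun x => σ x = x := by
    ext b
    simp only [Finset.mem_filter]
    tauto
  rw [hcomm, hfe]
  by_cases hd : σ a = a
  · rw [hd]
    simp [Finset.filter_singleton, hd]
  · have hne : a ≠ σ a := fun h => hd h.symm
    have hpair : ({a, σ a} : Finset α).card = 2 := by
      rw [Finset.card_insert_of_notMem (by simpa using hne), Finset.card_singleton]
    have hemp : ({a, σ a} : Finset α).filter (fun x => σ x = x) = ∅ := by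
      rw [Finset.filter_eq_empty_iff]
      intro b hb
      rcases Finset.mem_insert.mp hb with rfl | hb
      · exact hd
      · rw [Finset.mem_singleton] at hb
        subst hb
        rw [hinv a ha]
        exact hne
    rw [hpair, hemp, Finset.card_empty]

lemma re_fiber {u v : ℂ} (hu : ‖u‖ = 1) (hv : ‖v‖ = 1) (h : u.re = v.re) :
    v = u ∨ v = u⁻¹ := by
  have h1 : u.re * u.re + u.im * u.im = 1 := by
    rw [← Complex.normSq_apply, ← Complex.sq_norm, hu]; norm_num
  have h2 : v.re * v.re + v.im * v.im = 1 := by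
    rw [← Complex.normSq_apply, ← Complex.sq_norm, hv]; norm_num
  have him : v.im * v.im = u.im * u.im := by rw [h] at h1; linarith
  rcases mul_self_eq_mul_self_iff.mp him with h3 | h3
  · left; exact Complex.ext h.symm h3
  · right
    rw [Complex.inv_eq_conj hu]
    exact Complex.ext (by simpa using h.symm) (by simpa using h3)

noncomputable def hfun (x y : ℝ) : ℂ × ℂ := (((x + y : ℝ) : ℂ), ((x * y : ℝ) : ℂ))

lemma hfun_swap (x y : ℝ) : hfun x y = hfun y x := by
  simp only [hfun, Prod.mk.injEq]
  constructor <;> push_cast <;> ring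

lemma phi_eq {u v : ℂ} (hu : ‖u‖ = 1) (hv : ‖v‖ = 1) :
    PhiB2 u v = hfun (2 * u.re) (2 * v.re) := by
  have hu' : u⁻¹ = (starRingEnd ℂ) u := Complex.inv_eq_conj hu
  have hv' : v⁻¹ = (starRingEnd ℂ) v := Complex.inv_eq_conj hv
  have h2u := Complex.add_conj u
  have h2v := Complex.add_conj v
  push_cast at h2u h2v
  unfold PhiB2 hfun
  simp only [Prod.mk.injEq]
  constructor
  · rw [hu', hv']
    push_cast
    linear_combination h2u + h2v
  · rw [mul_inv, hu', hv']
    push_cast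
    linear_combination (v + (starRingEnd ℂ) v) * h2u + (2 * (u.re : ℂ)) * h2v

lemma hfun_inj {x y x' y' : ℝ} (h : hfun x y = hfun x' y') :
    (x' = x ∧ y' = y) ∨ (x' = y ∧ y' = x) := by
  simp only [hfun, Prod.mk.injEq, Complex.ofReal_inj] at h
  obtain ⟨h1, h2⟩ := h
  have key : (x' - x) * (x' - y) = 0 := by
    have e : (x' - x) * (x' - y) = x' * x' - (x + y) * x' + x * y := by ring
    rw [e, h1, h2]; ring
  rcases mul_eq_zero.mp key with h | h
  · left; exact ⟨by linarith, by linarith⟩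
  · right; exact ⟨by linarith, by linarith⟩

lemma m1pow (n : ℕ) (h : Even n) : (-1 : ℂ) ^ n = 1 := h.neg_one_pow

lemma m1pow_odd (n : ℕ) (h : Odd n) : (-1 : ℂ) ^ n ≠ 1 := by
  rw [h.neg_one_pow]
  norm_num

theorem stmt_10 (q : ℕ) (hq : IsPrimePow q) :
    ({xy : ℂ × ℂ | ∃ ζ ξ : ℂ, ζ ^ (q - 1) = 1 ∧ ξ ^ (q + 1) = 1 ∧ xy = PhiB2 ζ ξ}
      ∪ {xy : ℂ × ℂ | ∃ ζ ξ : ℂ, ζ ^ (q - 1) = 1 ∧ ξ ^ (q - 1) = 1 ∧ xy = PhiB2 ζ ξ}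
      ∪ {xy : ℂ × ℂ | ∃ ζ ξ : ℂ, ζ ^ (q + 1) = 1 ∧ ξ ^ (q + 1) = 1 ∧ xy = PhiB2 ζ ξ}
      ∪ {xy : ℂ × ℂ | ∃ ζ : ℂ, ζ ^ (q ^ 2 - 1) = 1 ∧ xy = PhiB2 ζ (ζ ^ q)}
      ∪ {xy : ℂ × ℂ | ∃ ζ : ℂ, ζ ^ (q ^ 2 + 1) = 1 ∧ xy = PhiB2 ζ (ζ ^ q)}).ncard
      = q ^ 2 := by
  classical
  have hq2 : 2 ≤ q := hq.two_le
  clear hq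
  have hQ : q ^ 2 = q * q := sq q
  have hQ4 : 4 ≤ q * q := Nat.mul_le_mul hq2 hq2
  have hq1pos : 0 < q - 1 := by omega
  have e1 : q ^ 2 - 1 = (q - 1) * (q + 1) := by
    obtain ⟨m, rfl⟩ : ∃ m, q = m + 2 := ⟨q - 2, by omega⟩
    have e2 : (m + 2) * (m + 2) = m * m + 4 * m + 4 := by ring
    have e3 : (m + 2 - 1) * (m + 2 + 1) = m * m + 4 * m + 3 := by
      have e4 : m + 2 - 1 = m + 1 := by omega
      rw [e4]; ring
    omega
  set R1 := Polynomial.nthRootsFinset (q - 1) (1 : ℂ) with hR1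
  set R2 := Polynomial.nthRootsFinset (q + 1) (1 : ℂ) with hR2
  set R4 := Polynomial.nthRootsFinset (q ^ 2 - 1) (1 : ℂ) with hR4
  set R5 := Polynomial.nthRootsFinset (q ^ 2 + 1) (1 : ℂ) with hR5
  set C := R1 ∪ R2 with hC
  have mem1 : ∀ z : ℂ, z ∈ R1 ↔ z ^ (q - 1) = 1 :=
    fun z => Polynomial.mem_nthRootsFinset hq1pos 1
  have mem2 : ∀ z : ℂ, z ∈ R2 ↔ z ^ (q + 1) = 1 :=
    fun z => Polynomial.mem_nthRootsFinset (by omega) 1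
  have mem4 : ∀ z : ℂ, z ∈ R4 ↔ z ^ (q ^ 2 - 1) = 1 :=
    fun z => Polynomial.mem_nthRootsFinset (by omega) 1
  have mem5 : ∀ z : ℂ, z ∈ R5 ↔ z ^ (q ^ 2 + 1) = 1 :=
    fun z => Polynomial.mem_nthRootsFinset (by omega) 1
  have hnormC : ∀ z ∈ C, ‖z‖ = 1 := by
    intro z hz
    rcases Finset.mem_union.mp hz with h | h
    · exact Complex.norm_eq_one_of_pow_eq_one ((mem1 z).mp h) (by omega)
    · exact Complex.norm_eq_one_of_pow_eq_one ((mem2 z).mp h) (by omega)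
  have hnorm4 : ∀ z ∈ R4, ‖z‖ = 1 := fun z hz =>
    Complex.norm_eq_one_of_pow_eq_one ((mem4 z).mp hz) (by omega)
  have hnorm5 : ∀ z ∈ R5, ‖z‖ = 1 := fun z hz =>
    Complex.norm_eq_one_of_pow_eq_one ((mem5 z).mp hz) (by omega)
  have hne0 : ∀ z : ℂ, ‖z‖ = 1 → z ≠ 0 := by
    intro z h h0; rw [h0] at h; simp at h
  have hnormpow : ∀ z : ℂ, ‖z‖ = 1 → ‖z ^ q‖ = 1 := by
    intro z h; rw [norm_pow, h, one_pow]
  have hCinv : ∀ z ∈ C, z⁻¹ ∈ C := by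
    intro z hz
    rcases Finset.mem_union.mp hz with h | h
    · exact Finset.mem_union_left _ ((mem1 _).mpr (by rw [inv_pow, (mem1 z).mp h, inv_one]))
    · exact Finset.mem_union_right _ ((mem2 _).mpr (by rw [inv_pow, (mem2 z).mp h, inv_one]))
  set r : ℂ → ℝ := fun z => 2 * z.re with hr
  have hrinv : ∀ z : ℂ, ‖z‖ = 1 → r z⁻¹ = r z := by
    intro z hz
    simp only [hr, Complex.inv_eq_conj hz, Complex.conj_re]
  have hrfib : ∀ u v : ℂ, ‖u‖ = 1 → ‖v‖ = 1 → r u = r v → v = u ∨ v = u⁻¹ := by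
    intro u v hu hv h
    exact re_fiber hu hv (by simp only [hr] at h; linarith)
  have hphi : ∀ u v : ℂ, ‖u‖ = 1 → ‖v‖ = 1 → PhiB2 u v = hfun (r u) (r v) := by
    intro u v hu hv
    simp only [hr]
    exact phi_eq hu hv
  have hC1 : (1 : ℂ) ∈ C := Finset.mem_union_left _ ((mem1 1).mpr (one_pow _))
  have hCneg : Odd q → (-1 : ℂ) ∈ C := by
    intro ho
    exact Finset.mem_union_left _ ((mem1 _).mpr (m1pow _ (by
      obtain ⟨k, hk⟩ := ho; exact ⟨k, by omega⟩)))
  have hpm : ∀ z : ℂ, z ^ 2 = 1 → z = 1 ∨ z = -1 := by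
    intro z h; rw [sq] at h; exact mul_self_eq_one_iff.mp h
  -- parity facts
  have hparity : ∀ P : Prop,
      (Even q → Odd (q - 1) ∧ Odd (q + 1) ∧ Odd (q ^ 2 - 1) ∧ Odd (q ^ 2 + 1) → P) →
      (Odd q → Even (q - 1) ∧ Even (q + 1) ∧ Even (q ^ 2 - 1) ∧ Even (q ^ 2 + 1) → P) → P := by
    intro P h1 h2
    rcases Nat.even_or_odd q with he | ho
    · obtain ⟨k, hk⟩ := he
      have hkk : q * q = 4 * (k * k) := by subst hk; ring
      exact h1 ⟨k, hk⟩ ⟨⟨k - 1, by omega⟩, ⟨k, by omega⟩, ⟨2 * (k * k) - 1, by omega⟩,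
        ⟨2 * (k * k), by omega⟩⟩
    · obtain ⟨k, hk⟩ := ho
      have hkk : q * q = 4 * (k * k) + 4 * k + 1 := by subst hk; ring
      exact h2 ⟨k, hk⟩ ⟨⟨k, by omega⟩, ⟨k + 1, by omega⟩, ⟨2 * (k * k) + 2 * k, by omega⟩,
        ⟨2 * (k * k) + 2 * k + 1, by omega⟩⟩
  -- z² = 1 and z a (q²∓1)-root implies z ∈ C
  have hCsq : ∀ z : ℂ, z ^ 2 = 1 → (z ^ (q ^ 2 - 1) = 1 ∨ z ^ (q ^ 2 + 1) = 1) → z ∈ C := by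
    intro z h2 h45
    rcases hpm z h2 with rfl | rfl
    · exact hC1
    · refine hparity _ (fun he hodds => ?_) (fun ho _ => hCneg ho)
      exfalso
      rcases h45 with h | h
      · exact m1pow_odd _ hodds.2.2.1 h
      · exact m1pow_odd _ hodds.2.2.2 h
  have hsq12 : ∀ z : ℂ, z ^ (q - 1) = 1 → z ^ (q + 1) = 1 → z ^ 2 = 1 := by
    intro z h1 h2
    have h3 : z ^ (q + 1) = z ^ (q - 1) * z ^ 2 := by
      rw [← pow_add]; congr 1; omega
    rw [h1, one_mul, h2] at h3
    exact h3.symm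
  have hdvd1 : ∀ z : ℂ, z ^ (q - 1) = 1 → z ^ (q ^ 2 - 1) = 1 := by
    intro z h1
    rw [e1, pow_mul, h1, one_pow]
  have hdvd2 : ∀ z : ℂ, z ^ (q + 1) = 1 → z ^ (q ^ 2 - 1) = 1 := by
    intro z h1
    have e1' : q ^ 2 - 1 = (q + 1) * (q - 1) := by rw [e1]; ring
    rw [e1', pow_mul, h1, one_pow]
  have hCsub4 : C ⊆ R4 := by
    intro z hz
    rcases Finset.mem_union.mp hz with h | h
    · exact (mem4 z).mpr (hdvd1 z ((mem1 z).mp h))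
    · exact (mem4 z).mpr (hdvd2 z ((mem2 z).mp h))
  have hsq45 : ∀ z : ℂ, z ^ (q ^ 2 - 1) = 1 → z ^ (q ^ 2 + 1) = 1 → z ^ 2 = 1 := by
    intro z h1 h2
    have h3 : z ^ (q ^ 2 + 1) = z ^ (q ^ 2 - 1) * z ^ 2 := by
      rw [← pow_add]; congr 1; omega
    rw [h1, one_mul, h2] at h3
    exact h3.symm
  -- the two "boundary" intersections agree
  have hR12 : R1 ∩ R2 = R5 ∩ C := by
    ext z
    rw [Finset.mem_inter, Finset.mem_inter, mem1, mem2, mem5]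
    constructor
    · rintro ⟨h1, h2⟩
      have hz2 := hsq12 z h1 h2
      have hzC : z ∈ C := Finset.mem_union_left _ ((mem1 z).mpr h1)
      refine ⟨?_, hzC⟩
      rcases hpm z hz2 with rfl | rfl
      · exact one_pow _
      · refine hparity _ (fun he hodds => ?_) (fun ho hevens => ?_)
        · exact absurd h1 (m1pow_odd _ hodds.1)
        · exact m1pow _ hevens.2.2.2
    · rintro ⟨h5, hzC⟩
      have hz2 : z ^ 2 = 1 := by
        rcases Finset.mem_union.mp hzC with h | h
        · exact hsq45 z (hdvd1 z ((mem1 z).mp h)) h5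
        · exact hsq45 z (hdvd2 z ((mem2 z).mp h)) h5
      rcases hpm z hz2 with rfl | rfl
      · exact ⟨one_pow _, one_pow _⟩
      · refine hparity _ (fun he hodds => ?_) (fun ho hevens => ?_)
        · exact absurd h5 (m1pow_odd _ hodds.2.2.2)
        · exact ⟨m1pow _ hevens.1, m1pow _ hevens.2.1⟩
  -- the filter of conj-fixed points of C is R1 ∩ R2
  have hreal : ∀ z : ℂ, ‖z‖ = 1 → z.im = 0 → z = 1 ∨ z = -1 := by
    intro z hz him
    have h1 : z.re * z.re + z.im * z.im = 1 := by
      rw [← Complex.normSq_apply, ← Complex.sq_norm, hz]; norm_num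
    rw [him] at h1
    rcases mul_self_eq_one_iff.mp (by linarith : z.re * z.re = 1) with h | h
    · left; exact Complex.ext h (by simpa using him)
    · right; exact Complex.ext (by simpa using h) (by simpa using him)
  have hfilterC : C.filter (fun z => (starRingEnd ℂ) z = z) = R1 ∩ R2 := by
    ext z
    rw [Finset.mem_filter, Finset.mem_inter, mem1, mem2]
    constructor
    · rintro ⟨hzC, hconj⟩
      rcases hreal z (hnormC z hzC) (Complex.conj_eq_iff_im.mp hconj) with rfl | rfl
      · exact ⟨one_pow _, one_pow _⟩
      · refine hparity _ (fun he hodds => ?_) (fun ho hevens => ?_)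
        · exfalso
          rcases Finset.mem_union.mp hzC with h | h
          · exact m1pow_odd _ hodds.1 ((mem1 _).mp h)
          · exact m1pow_odd _ hodds.2.1 ((mem2 _).mp h)
        · exact ⟨m1pow _ hevens.1, m1pow _ hevens.2.1⟩
    · rintro ⟨h1, h2⟩
      have hzC : z ∈ C := Finset.mem_union_left _ ((mem1 z).mpr h1)
      refine ⟨hzC, ?_⟩
      rcases hpm z (hsq12 z h1 h2) with rfl | rfl
      · exact map_one _
      · simp
  set I := C.image r with hI
  have hIcard : I.card = q := by
    have hG1 := twoToOne C r (fun z => (starRingEnd ℂ) z)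
      (fun a ha => by
        rcases Finset.mem_union.mp ha with h | h
        · exact Finset.mem_union_left _ ((mem1 _).mpr
            (by rw [← map_pow, (mem1 a).mp h, map_one]))
        · exact Finset.mem_union_right _ ((mem2 _).mpr
            (by rw [← map_pow, (mem2 a).mp h, map_one])))
      (fun a _ => Complex.conj_conj a)
      (fun a _ => by simp only [hr, Complex.conj_re])
      (fun a ha b hb hab => by
        rcases hrfib a b (hnormC a ha) (hnormC b hb) hab with h | h
        · exact Or.inl h
        · rw [Complex.inv_eq_conj (hnormC a ha)] at h
          exact Or.inr h)
    rw [hfilterC] at hG1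
    have hcards : C.card + (R1 ∩ R2).card = (q - 1) + (q + 1) := by
      rw [hC, Finset.card_union_add_card_inter,
        (Complex.isPrimitiveRoot_exp (q - 1) (by omega)).card_nthRootsFinset,
        (Complex.isPrimitiveRoot_exp (q + 1) (by omega)).card_nthRootsFinset]
    rw [← hI] at hG1
    omega
  set pr : ℂ → ℝ × ℝ := fun z => (r z, r (z ^ q)) with hprdef
  set T4 := (R4 \ C).image pr with hT4
  set T5 := (R5 \ C).image pr with hT5
  have hprinv : ∀ z : ℂ, ‖z‖ = 1 → pr z⁻¹ = pr z := by
    intro z hz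
    simp only [hprdef]
    rw [inv_pow, hrinv z hz, hrinv (z ^ q) (hnormpow z hz)]
  -- counting T4 and T5
  have hcount45 : ∀ n : ℕ, 0 < n →
      (∀ z : ℂ, z ^ n = 1 → ‖z‖ = 1) →
      (∀ z : ℂ, z ^ 2 = 1 → z ^ n = 1 → z ∈ C) →
      2 * (((Polynomial.nthRootsFinset n (1 : ℂ)) \ C).image pr).card
        = ((Polynomial.nthRootsFinset n (1 : ℂ)) \ C).card := by
    intro n hn hnorm hsq
    have memn : ∀ z : ℂ, z ∈ Polynomial.nthRootsFinset n (1 : ℂ) ↔ z ^ n = 1 :=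
      fun z => Polynomial.mem_nthRootsFinset hn 1
    have hnorm' : ∀ z ∈ (Polynomial.nthRootsFinset n (1 : ℂ)) \ C, ‖z‖ = 1 :=
      fun z hz => hnorm z ((memn z).mp (Finset.mem_sdiff.mp hz).1)
    have hG := twoToOne ((Polynomial.nthRootsFinset n (1 : ℂ)) \ C) pr (fun z => z⁻¹)
      (fun a ha => by
        obtain ⟨ha1, ha2⟩ := Finset.mem_sdiff.mp ha
        refine Finset.mem_sdiff.mpr ⟨(memn _).mpr ?_, fun hmem => ?_⟩
        · rw [inv_pow, (memn a).mp ha1, inv_one]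
        · exact ha2 (by simpa using hCinv _ hmem))
      (fun a _ => inv_inv a)
      (fun a ha => hprinv a (hnorm' a ha))
      (fun a ha b hb hab => by
        have h1 : r a = r b := congrArg Prod.fst hab
        exact hrfib a b (hnorm' a ha) (hnorm' b hb) h1)
    have hemp : ((Polynomial.nthRootsFinset n (1 : ℂ)) \ C).filter (fun z => z⁻¹ = z) = ∅ := by
      rw [Finset.filter_eq_empty_iff]
      intro z hz hinv
      obtain ⟨hz1, hz2⟩ := Finset.mem_sdiff.mp hz
      have hz0 : z ≠ 0 := hne0 z (hnorm' z hz)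
      have hz2' : z ^ 2 = 1 := by
        rw [sq]
        nth_rewrite 1 [← hinv]
        exact inv_mul_cancel₀ hz0
      exact hz2 (hsq z hz2' ((memn z).mp hz1))
    rw [hemp, Finset.card_empty, add_zero] at hG
    exact hG
  have hT4card : 2 * T4.card = (R4 \ C).card :=
    hcount45 (q ^ 2 - 1) (by omega)
      (fun z h => Complex.norm_eq_one_of_pow_eq_one h (by omega))
      (fun z h2 hn => hCsq z h2 (Or.inl hn))
  have hT5card : 2 * T5.card = (R5 \ C).card :=
    hcount45 (q ^ 2 + 1) (by omega)
      (fun z h => Complex.norm_eq_one_of_pow_eq_one h (by omega))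
      (fun z h2 hn => hCsq z h2 (Or.inr hn))
  have hn1 : (R4 \ C).card + C.card = q ^ 2 - 1 := by
    have := Finset.card_sdiff_add_card_inter R4 C
    rw [Finset.inter_eq_right.mpr hCsub4,
      (Complex.isPrimitiveRoot_exp (q ^ 2 - 1) (by omega)).card_nthRootsFinset] at this
    exact this
  have hn2 : (R5 \ C).card + (R1 ∩ R2).card = q ^ 2 + 1 := by
    have := Finset.card_sdiff_add_card_inter R5 C
    rw [← hR12,
      (Complex.isPrimitiveRoot_exp (q ^ 2 + 1) (by omega)).card_nthRootsFinset] at this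
    exact this
  have hn3 : C.card + (R1 ∩ R2).card = (q - 1) + (q + 1) := by
    rw [hC, Finset.card_union_add_card_inter,
      (Complex.isPrimitiveRoot_exp (q - 1) (by omega)).card_nthRootsFinset,
      (Complex.isPrimitiveRoot_exp (q + 1) (by omega)).card_nthRootsFinset]
  set T : Finset (ℝ × ℝ) := (I ×ˢ I ∪ T4) ∪ T5 with hT
  -- first coordinates of T4/T5 elements are not in I
  have hfst : ∀ (z : ℂ), ‖z‖ = 1 → z ∉ C → r z ∉ I := by
    intro z hz hzC hrz
    obtain ⟨w, hw, hweq⟩ := Finset.mem_image.mp hrz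
    rcases hrfib w z (hnormC w hw) hz hweq with rfl | rfl
    · exact hzC hw
    · exact hzC (hCinv w hw)
  have hdisj14 : Disjoint (I ×ˢ I) T4 := by
    rw [Finset.disjoint_left]
    intro p hp hp4
    obtain ⟨z, hz, rfl⟩ := Finset.mem_image.mp hp4
    obtain ⟨hz1, hz2⟩ := Finset.mem_sdiff.mp hz
    exact hfst z (hnorm4 z hz1) hz2 (Finset.mem_product.mp hp).1
  have hdisj15 : Disjoint (I ×ˢ I) T5 := by
    rw [Finset.disjoint_left]
    intro p hp hp5
    obtain ⟨z, hz, rfl⟩ := Finset.mem_image.mp hp5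
    obtain ⟨hz1, hz2⟩ := Finset.mem_sdiff.mp hz
    exact hfst z (hnorm5 z hz1) hz2 (Finset.mem_product.mp hp).1
  have hdisj45 : Disjoint T4 T5 := by
    rw [Finset.disjoint_left]
    intro p hp4 hp5
    obtain ⟨z, hz, hzeq⟩ := Finset.mem_image.mp hp4
    obtain ⟨w, hw, hweq⟩ := Finset.mem_image.mp hp5
    obtain ⟨hz1, hz2⟩ := Finset.mem_sdiff.mp hz
    obtain ⟨hw1, hw2⟩ := Finset.mem_sdiff.mp hw
    have h1 : r z = r w := by
      have := hzeq.trans hweq.symm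
      exact congrArg Prod.fst this
    have hw4 : w ^ (q ^ 2 - 1) = 1 := by
      rcases hrfib z w (hnorm4 z hz1) (hnorm5 w hw1) h1 with h | h
      · rw [h]; exact (mem4 z).mp hz1
      · rw [h, inv_pow, (mem4 z).mp hz1, inv_one]
    exact hw2 (hCsq w (hsq45 w hw4 ((mem5 w).mp hw1)) (Or.inr ((mem5 w).mp hw1)))
  have hTcard : T.card = q * q + (T4.card + T5.card) := by
    rw [hT, Finset.card_union_of_disjoint
        (Finset.disjoint_union_left.mpr ⟨hdisj15, hdisj45⟩),
      Finset.card_union_of_disjoint hdisj14, Finset.card_product, hIcard]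
    omega
  -- q-th powers of elements of C
  have hCpowq : ∀ w ∈ C, w ^ q = w ∨ w ^ q = w⁻¹ := by
    intro w hw
    rcases Finset.mem_union.mp hw with h | h
    · left
      have : w ^ q = w ^ (q - 1) * w := by
        rw [← pow_succ]; congr 1; omega
      rw [this, (mem1 w).mp h, one_mul]
    · right
      refine eq_inv_of_mul_eq_one_left ?_
      have : w ^ q * w = w ^ (q + 1) := (pow_succ w q).symm
      rw [this, (mem2 w).mp h]
  -- diagonal elements of T4 / T5 do not exist
  have hdiag45 : ∀ (z : ℂ), ‖z‖ = 1 → z ∉ C → r (z ^ q) ≠ r z := by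
    intro z hz hzC heq
    have hzq : ‖z ^ q‖ = 1 := hnormpow z hz
    have hz0 : z ≠ 0 := hne0 z hz
    rcases hrfib (z ^ q) z hzq hz heq with h | h
    · -- z = z^q hence z^(q-1) = 1
      apply hzC
      refine Finset.mem_union_left _ ((mem1 z).mpr ?_)
      have h2 : z ^ (q - 1) * z = z := by
        rw [← pow_succ]
        have he : q - 1 + 1 = q := by omega
        rw [he, ← h]
      exact mul_right_cancel₀ hz0 (h2.trans (one_mul z).symm)
    · -- z = (z^q)⁻¹ hence z^(q+1) = 1
      apply hzC
      refine Finset.mem_union_right _ ((mem2 z).mpr ?_)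
      have hmul : z ^ q * z = 1 := by
        nth_rewrite 2 [h]
        exact mul_inv_cancel₀ (pow_ne_zero q hz0)
      rw [pow_succ]
      exact hmul
  -- the diagonal of T
  have hdiagT : T.filter (fun p => Prod.swap p = p) = I.image (fun x => (x, x)) := by
    ext p
    rw [Finset.mem_filter, Finset.mem_image]
    constructor
    · rintro ⟨hpT, hsw⟩
      have hd : p.2 = p.1 := congrArg Prod.fst hsw
      rcases Finset.mem_union.mp hpT with h | h5
      · rcases Finset.mem_union.mp h with hII | h4
        · exact ⟨p.1, (Finset.mem_product.mp hII).1, Prod.ext rfl hd.symm⟩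
        · exfalso
          obtain ⟨z, hz, hzeq⟩ := Finset.mem_image.mp h4
          obtain ⟨hz1, hz2⟩ := Finset.mem_sdiff.mp hz
          apply hdiag45 z (hnorm4 z hz1) hz2
          have e2 : r (z ^ q) = p.2 := congrArg Prod.snd hzeq
          have e3 : r z = p.1 := congrArg Prod.fst hzeq
          rw [e2, e3, hd]
      · exfalso
        obtain ⟨z, hz, hzeq⟩ := Finset.mem_image.mp h5
        obtain ⟨hz1, hz2⟩ := Finset.mem_sdiff.mp hz
        apply hdiag45 z (hnorm5 z hz1) hz2
        have e2 : r (z ^ q) = p.2 := congrArg Prod.snd hzeq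
        have e3 : r z = p.1 := congrArg Prod.fst hzeq
        rw [e2, e3, hd]
    · rintro ⟨x, hx, rfl⟩
      exact ⟨Finset.mem_union_left _ (Finset.mem_union_left _
        (Finset.mem_product.mpr ⟨hx, hx⟩)), rfl⟩
  have hdiagcard : (T.filter (fun p => Prod.swap p = p)).card = q := by
    rw [hdiagT, Finset.card_image_of_injective _ (fun a b h => congrArg Prod.fst h), hIcard]
  -- T is closed under swap
  have hswapT4 : ∀ z ∈ R4 \ C, Prod.swap (pr z) = pr (z ^ q) ∧ z ^ q ∈ R4 \ C := by
    intro z hz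
    obtain ⟨hz1, hz2⟩ := Finset.mem_sdiff.mp hz
    have hz4 : z ^ (q ^ 2 - 1) = 1 := (mem4 z).mp hz1
    have hzq : (z ^ q) ^ q = z := by
      rw [← pow_mul, ← hQ]
      have e2 : q ^ 2 = (q ^ 2 - 1) + 1 := by omega
      rw [e2, pow_succ, hz4, one_mul]
    constructor
    · simp only [hprdef, Prod.swap_prod_mk, hzq]
    · refine Finset.mem_sdiff.mpr ⟨(mem4 _).mpr ?_, fun hmem => hz2 ?_⟩
      · rw [← pow_mul, mul_comm, pow_mul, hz4, one_pow]
      · -- z^q ∈ C implies z ∈ C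
        rcases hCpowq (z ^ q) hmem with h | h
        · rw [hzq] at h; rw [h]; exact hmem
        · rw [hzq] at h; rw [h]; exact hCinv _ hmem
  have hswapT5 : ∀ z ∈ R5 \ C, Prod.swap (pr z) = pr (z ^ q) ∧ z ^ q ∈ R5 \ C := by
    intro z hz
    obtain ⟨hz1, hz2⟩ := Finset.mem_sdiff.mp hz
    have hz5 : z ^ (q ^ 2 + 1) = 1 := (mem5 z).mp hz1
    have hz0 : z ≠ 0 := hne0 z (hnorm5 z hz1)
    have hzq : (z ^ q) ^ q = z⁻¹ := by
      rw [← pow_mul, ← hQ]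
      refine eq_inv_of_mul_eq_one_left ?_
      rw [← pow_succ, hz5]
    constructor
    · simp only [hprdef, Prod.swap_prod_mk, hzq, hrinv z (hnorm5 z hz1)]
    · refine Finset.mem_sdiff.mpr ⟨(mem5 _).mpr ?_, fun hmem => hz2 ?_⟩
      · rw [← pow_mul, mul_comm, pow_mul, hz5, one_pow]
      · rcases hCpowq (z ^ q) hmem with h | h
        · rw [hzq] at h
          rw [← inv_inv z, h]
          exact hCinv _ hmem
        · rw [hzq, inv_inj] at h
          rw [h]
          exact hmem
  have hswapmem : ∀ p ∈ T, Prod.swap p ∈ T := by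
    intro p hp
    rcases Finset.mem_union.mp hp with h | h5
    · rcases Finset.mem_union.mp h with hII | h4
      · obtain ⟨h1, h2⟩ := Finset.mem_product.mp hII
        exact Finset.mem_union_left _ (Finset.mem_union_left _
          (Finset.mem_product.mpr ⟨h2, h1⟩))
      · obtain ⟨z, hz, rfl⟩ := Finset.mem_image.mp h4
        obtain ⟨he, hm⟩ := hswapT4 z hz
        rw [he]
        exact Finset.mem_union_left _ (Finset.mem_union_right _
          (Finset.mem_image_of_mem pr hm))
    · obtain ⟨z, hz, rfl⟩ := Finset.mem_image.mp h5
      obtain ⟨he, hm⟩ := hswapT5 z hz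
      rw [he]
      exact Finset.mem_union_right _ (Finset.mem_image_of_mem pr hm)
  -- the final two-to-one count over T
  have hG2 := twoToOne T (fun p => hfun p.1 p.2) Prod.swap
    hswapmem
    (fun a _ => Prod.swap_swap a)
    (fun a _ => (hfun_swap a.2 a.1 : hfun a.2 a.1 = hfun a.1 a.2))
    (fun a _ b _ hab => by
      rcases hfun_inj hab with ⟨h1, h2⟩ | ⟨h1, h2⟩
      · exact Or.inl (Prod.ext h1 h2)
      · exact Or.inr (Prod.ext h1 h2))
  -- norms of roots
  have hnq1 : ∀ z : ℂ, z ^ (q - 1) = 1 → ‖z‖ = 1 :=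
    fun z h => Complex.norm_eq_one_of_pow_eq_one h (by omega)
  have hnq2 : ∀ z : ℂ, z ^ (q + 1) = 1 → ‖z‖ = 1 :=
    fun z h => Complex.norm_eq_one_of_pow_eq_one h (by omega)
  have hnq4 : ∀ z : ℂ, z ^ (q ^ 2 - 1) = 1 → ‖z‖ = 1 :=
    fun z h => Complex.norm_eq_one_of_pow_eq_one h (by omega)
  have hnq5 : ∀ z : ℂ, z ^ (q ^ 2 + 1) = 1 → ‖z‖ = 1 :=
    fun z h => Complex.norm_eq_one_of_pow_eq_one h (by omega)
  have hmemI : ∀ z ∈ C, r z ∈ I := fun z hz => Finset.mem_image_of_mem r hz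
  -- the big set equality
  have hset : ({xy : ℂ × ℂ | ∃ ζ ξ : ℂ, ζ ^ (q - 1) = 1 ∧ ξ ^ (q + 1) = 1 ∧ xy = PhiB2 ζ ξ}
      ∪ {xy : ℂ × ℂ | ∃ ζ ξ : ℂ, ζ ^ (q - 1) = 1 ∧ ξ ^ (q - 1) = 1 ∧ xy = PhiB2 ζ ξ}
      ∪ {xy : ℂ × ℂ | ∃ ζ ξ : ℂ, ζ ^ (q + 1) = 1 ∧ ξ ^ (q + 1) = 1 ∧ xy = PhiB2 ζ ξ}
      ∪ {xy : ℂ × ℂ | ∃ ζ : ℂ, ζ ^ (q ^ 2 - 1) = 1 ∧ xy = PhiB2 ζ (ζ ^ q)}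
      ∪ {xy : ℂ × ℂ | ∃ ζ : ℂ, ζ ^ (q ^ 2 + 1) = 1 ∧ xy = PhiB2 ζ (ζ ^ q)})
      = ↑(T.image (fun p => hfun p.1 p.2)) := by
    ext xy
    simp only [Set.mem_union, Set.mem_setOf_eq, Finset.coe_image, Set.mem_image,
      Finset.mem_coe]
    constructor
    · rintro ((((⟨ζ, ξ, h1, h2, rfl⟩ | ⟨ζ, ξ, h1, h2, rfl⟩) | ⟨ζ, ξ, h1, h2, rfl⟩)
        | ⟨ζ, h1, rfl⟩) | ⟨ζ, h1, rfl⟩)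
      · refine ⟨(r ζ, r ξ), ?_, (hphi ζ ξ (hnq1 ζ h1) (hnq2 ξ h2)).symm⟩
        exact Finset.mem_union_left _ (Finset.mem_union_left _ (Finset.mem_product.mpr
          ⟨hmemI ζ (Finset.mem_union_left _ ((mem1 ζ).mpr h1)),
           hmemI ξ (Finset.mem_union_right _ ((mem2 ξ).mpr h2))⟩))
      · refine ⟨(r ζ, r ξ), ?_, (hphi ζ ξ (hnq1 ζ h1) (hnq1 ξ h2)).symm⟩
        exact Finset.mem_union_left _ (Finset.mem_union_left _ (Finset.mem_product.mpr
          ⟨hmemI ζ (Finset.mem_union_left _ ((mem1 ζ).mpr h1)),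
           hmemI ξ (Finset.mem_union_left _ ((mem1 ξ).mpr h2))⟩))
      · refine ⟨(r ζ, r ξ), ?_, (hphi ζ ξ (hnq2 ζ h1) (hnq2 ξ h2)).symm⟩
        exact Finset.mem_union_left _ (Finset.mem_union_left _ (Finset.mem_product.mpr
          ⟨hmemI ζ (Finset.mem_union_right _ ((mem2 ζ).mpr h1)),
           hmemI ξ (Finset.mem_union_right _ ((mem2 ξ).mpr h2))⟩))
      · -- S₄
        have hn : ‖ζ‖ = 1 := hnq4 ζ h1
        have heq : PhiB2 ζ (ζ ^ q) = hfun (r ζ) (r (ζ ^ q)) :=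
          hphi ζ (ζ ^ q) hn (hnormpow ζ hn)
        by_cases hζC : ζ ∈ C
        · have hre : r (ζ ^ q) = r ζ := by
            rcases hCpowq ζ hζC with h | h
            · rw [h]
            · rw [h, hrinv ζ hn]
          refine ⟨(r ζ, r ζ), ?_, ?_⟩
          · exact Finset.mem_union_left _ (Finset.mem_union_left _
              (Finset.mem_product.mpr ⟨hmemI ζ hζC, hmemI ζ hζC⟩))
          · rw [heq, hre]
        · refine ⟨pr ζ, ?_, ?_⟩
          · exact Finset.mem_union_left _ (Finset.mem_union_right _
              (Finset.mem_image_of_mem pr (Finset.mem_sdiff.mpr ⟨(mem4 ζ).mpr h1, hζC⟩)))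
          · rw [heq]
      · -- S₅
        have hn : ‖ζ‖ = 1 := hnq5 ζ h1
        have heq : PhiB2 ζ (ζ ^ q) = hfun (r ζ) (r (ζ ^ q)) :=
          hphi ζ (ζ ^ q) hn (hnormpow ζ hn)
        by_cases hζC : ζ ∈ C
        · have hre : r (ζ ^ q) = r ζ := by
            rcases hCpowq ζ hζC with h | h
            · rw [h]
            · rw [h, hrinv ζ hn]
          refine ⟨(r ζ, r ζ), ?_, ?_⟩
          · exact Finset.mem_union_left _ (Finset.mem_union_left _
              (Finset.mem_product.mpr ⟨hmemI ζ hζC, hmemI ζ hζC⟩))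
          · rw [heq, hre]
        · refine ⟨pr ζ, ?_, ?_⟩
          · exact Finset.mem_union_right _
              (Finset.mem_image_of_mem pr (Finset.mem_sdiff.mpr ⟨(mem5 ζ).mpr h1, hζC⟩))
          · rw [heq]
    · rintro ⟨p, hpT, rfl⟩
      rcases Finset.mem_union.mp hpT with h | h5
      · rcases Finset.mem_union.mp h with hII | h4
        · obtain ⟨hp1, hp2⟩ := Finset.mem_product.mp hII
          obtain ⟨z, hz, hzeq⟩ := Finset.mem_image.mp hp1
          obtain ⟨w, hw, hweq⟩ := Finset.mem_image.mp hp2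
          have hzn : ‖z‖ = 1 := hnormC z hz
          have hwn : ‖w‖ = 1 := hnormC w hw
          have hpe : p = (r z, r w) := by rw [hzeq, hweq]
          rcases Finset.mem_union.mp hz with hz1 | hz2
          · rcases Finset.mem_union.mp hw with hw1 | hw2
            · -- S₂
              refine Or.inl (Or.inl (Or.inl (Or.inr ⟨z, w, (mem1 z).mp hz1,
                (mem1 w).mp hw1, ?_⟩)))
              rw [hphi z w hzn hwn, hpe]
            · -- S₁
              refine Or.inl (Or.inl (Or.inl (Or.inl ⟨z, w, (mem1 z).mp hz1,
                (mem2 w).mp hw2, ?_⟩)))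
              rw [hphi z w hzn hwn, hpe]
          · rcases Finset.mem_union.mp hw with hw1 | hw2
            · -- S₁ with swapped args
              refine Or.inl (Or.inl (Or.inl (Or.inl ⟨w, z, (mem1 w).mp hw1,
                (mem2 z).mp hz2, ?_⟩)))
              rw [hphi w z hwn hzn, hpe]
              exact (hfun_swap (r z) (r w))
            · -- S₃
              refine Or.inl (Or.inl (Or.inr ⟨z, w, (mem2 z).mp hz2,
                (mem2 w).mp hw2, ?_⟩))
              rw [hphi z w hzn hwn, hpe]
        · obtain ⟨z, hz, rfl⟩ := Finset.mem_image.mp h4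
          obtain ⟨hz1, _⟩ := Finset.mem_sdiff.mp hz
          have hzn : ‖z‖ = 1 := hnorm4 z hz1
          refine Or.inl (Or.inr ⟨z, (mem4 z).mp hz1, ?_⟩)
          rw [hphi z (z ^ q) hzn (hnormpow z hzn)]
      · obtain ⟨z, hz, rfl⟩ := Finset.mem_image.mp h5
        obtain ⟨hz1, _⟩ := Finset.mem_sdiff.mp hz
        have hzn : ‖z‖ = 1 := hnorm5 z hz1
        refine Or.inr ⟨z, (mem5 z).mp hz1, ?_⟩
        rw [hphi z (z ^ q) hzn (hnormpow z hzn)]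
  rw [hset, Set.ncard_coe_finset]
  rw [hdiagcard, hTcard] at hG2
  omega
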